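/- Let n ≥ 2, α > 0 and 1 ≤ p ≤ n/α, and let 0 < δ < 1. Let T = [0, δ^{-1}]^{n-1} × [0, δ^{-2}] ⊆ ℝⁿ and V = χ_T. Then there exist constants c, C > 0 depending only on n, α and p such that: if 1/p ≥ α/(n-1) then c δ^{-α} ≤ ‖V‖_{𝓛^{α,p}} ≤ C δ^{-α}, while if 1/p ≤ α/(n-1) then c δ^{-2α + (n-1)/p} ≤ ‖V‖_{𝓛^{α,p}} ≤ C δ^{-2α + (n-1)/p}. -/

import Mathlib

open Real MeasureTheory ENNReal

/-- The Morrey–Campanato norm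
`‖V‖_{𝓛^{α,p}} = sup_{x,r>0} r^α (r^{-n} ∫_{B(x,r)} V^p)^{1/p}` (valued in `ℝ≥0∞`). -/
noncomputable def morreyNorm (n : ℕ) (α p : ℝ) (V : EuclideanSpace ℝ (Fin n) → ℝ) : ℝ≥0∞ :=
  ⨆ (x : EuclideanSpace ℝ (Fin n)) (r : ℝ) (_ : 0 < r),
    ENNReal.ofReal (r ^ α) *
      (ENNReal.ofReal (r ^ (-(n : ℝ))) *
        ∫⁻ y in Metric.ball x r, ENNReal.ofReal (V y ^ p)) ^ (1/p)

lemma box_volume (m : ℕ) (I : Fin m → Set ℝ) :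
    volume {z : EuclideanSpace ℝ (Fin m) | ∀ j, z j ∈ I j} = ∏ j, volume (I j) := by
  have h := (EuclideanSpace.volume_preserving_symm_measurableEquiv_toLp (Fin m)).measure_preimage_equiv
      (Set.univ.pi I)
  rw [← volume_pi_pi I, ← h]
  congr 1
  ext z
  simp [MeasurableEquiv.coe_toLp_symm, Set.mem_pi]

lemma coord_abs (m : ℕ) (z x : EuclideanSpace ℝ (Fin m)) (j : Fin m) :
    |z j - x j| ≤ dist z x := by
  rw [EuclideanSpace.dist_eq, ← Real.sqrt_sq_eq_abs]
  apply Real.sqrt_le_sqrt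
  have h : dist (z j) (x j) ^ 2 = (z j - x j) ^ 2 := by rw [Real.dist_eq, sq_abs]
  rw [← h]
  exact Finset.single_le_sum (f := fun i => dist (z i) (x i) ^ 2) (fun i _ => sq_nonneg _)
    (Finset.mem_univ j)

lemma keyUB (k : ℕ) (hk : 1 ≤ k) (α p t s δ r : ℝ) (hα : 0 < α) (hp1 : 1 ≤ p)
    (ht0 : 0 ≤ t) (ht1 : t ≤ 1) (hs0 : 0 ≤ s) (hs1 : s ≤ 1)
    (hts : t*(k:ℝ) + s = ((k:ℝ)+1) - α*p) (hδ0 : 0 < δ) (hδ1 : δ < 1) (hr : 0 < r) :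
    r ^ α * (r ^ (-((k:ℝ)+1)) * (min δ⁻¹ (2*r) ^ k * min ((δ^2)⁻¹) (2*r))) ^ (1/p)
      ≤ 2 ^ ((k:ℝ)+1) * δ ^ (-(((1-t)*(k:ℝ) + 2*(1-s))/p)) := by
  have hp0 : (0:ℝ) < p := lt_of_lt_of_le one_pos hp1
  have hK : (1:ℝ) ≤ (k:ℝ) := by exact_mod_cast hk
  set K := (k:ℝ) with hKdef
  have h2r : (0:ℝ) < 2*r := by linarith
  have hδi : (0:ℝ) < δ⁻¹ := by positivity
  have hδ2i : (0:ℝ) < (δ^2)⁻¹ := by positivity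
  set m1 := min δ⁻¹ (2*r) with hm1def
  set m2 := min ((δ^2)⁻¹) (2*r) with hm2def
  have hm1 : (0:ℝ) < m1 := lt_min hδi h2r
  have hm2 : (0:ℝ) < m2 := lt_min hδ2i h2r
  have hX : (0:ℝ) < r ^ (-(K+1)) * (m1 ^ k * m2) := by positivity
  set Lr := Real.log r
  set L2 := Real.log 2
  set Lδ := Real.log δ
  set Lm1 := Real.log m1
  set Lm2 := Real.log m2
  have hl2r : Real.log (2*r) = L2 + Lr := Real.log_mul two_ne_zero (ne_of_gt hr)
  have f1 : Lm1 ≤ L2 + Lr := by rw [← hl2r]; exact Real.log_le_log hm1 (min_le_right _ _)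
  have f2 : Lm1 ≤ -Lδ := by
    rw [← Real.log_inv]; exact Real.log_le_log hm1 (min_le_left _ _)
  have f3 : Lm2 ≤ L2 + Lr := by rw [← hl2r]; exact Real.log_le_log hm2 (min_le_right _ _)
  have f4 : Lm2 ≤ -(2*Lδ) := by
    have h : Real.log ((δ^2)⁻¹) = -(2*Lδ) := by
      rw [Real.log_inv, Real.log_pow]; push_cast; ring
    rw [← h]; exact Real.log_le_log hm2 (min_le_left _ _)
  have f5 : Lδ < 0 := Real.log_neg hδ0 hδ1
  have f6 : (0:ℝ) < L2 := Real.log_pos one_lt_two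
  have hLHS : r ^ α * (r ^ (-(K+1)) * (m1 ^ k * m2)) ^ (1/p)
      = Real.exp (α*Lr + (1/p) * (-(K+1)*Lr + K*Lm1 + Lm2)) := by
    rw [Real.rpow_def_of_pos hr, Real.rpow_def_of_pos hX, ← Real.exp_add]
    congr 1
    have hlx : Real.log (r ^ (-(K+1)) * (m1 ^ k * m2))
        = -(K+1)*Lr + K*Lm1 + Lm2 := by
      rw [Real.log_mul (by positivity) (by positivity),
        Real.log_mul (by positivity) (ne_of_gt hm2),
        Real.log_rpow hr, Real.log_pow]
      ring
    rw [hlx]; ring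
  have hRHS : (2:ℝ) ^ (K+1) * δ ^ (-(((1-t)*K + 2*(1-s))/p))
      = Real.exp ((K+1)*L2 + (-(((1-t)*K + 2*(1-s))/p))*Lδ) := by
    rw [Real.rpow_def_of_pos two_pos, Real.rpow_def_of_pos hδ0, ← Real.exp_add]
    congr 1; ring
  rw [hLHS, hRHS]
  apply Real.exp_le_exp.mpr
  have hc1 : K * Lm1 ≤ (t*K)*(L2+Lr) + ((1-t)*K)*(-Lδ) := by
    have e : K * Lm1 = (t*K)*Lm1 + ((1-t)*K)*Lm1 := by ring
    rw [e]
    exact add_le_add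
      (mul_le_mul_of_nonneg_left f1 (mul_nonneg ht0 (by linarith)))
      (mul_le_mul_of_nonneg_left f2 (mul_nonneg (by linarith) (by linarith)))
  have hc2 : Lm2 ≤ s*(L2+Lr) + (1-s)*(-(2*Lδ)) := by
    have e : Lm2 = s*Lm2 + (1-s)*Lm2 := by ring
    rw [e]
    exact add_le_add
      (mul_le_mul_of_nonneg_left f3 hs0)
      (mul_le_mul_of_nonneg_left f4 (by linarith))
  have hW : -(K+1)*Lr + K*Lm1 + Lm2
      ≤ (K+1-α*p)*(L2+Lr) - ((1-t)*K + 2*(1-s))*Lδ - (K+1)*Lr := by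
    have hts' : (t*K+s)*(L2+Lr) = (K+1-α*p)*(L2+Lr) := by rw [hts]
    linarith [hc1, hc2, hts']
  have step : α*Lr + (1/p) * (-(K+1)*Lr + K*Lm1 + Lm2)
      ≤ α*Lr + (1/p) * ((K+1-α*p)*(L2+Lr) - ((1-t)*K + 2*(1-s))*Lδ - (K+1)*Lr) := by
    have h := mul_le_mul_of_nonneg_left hW (le_of_lt (by positivity : (0:ℝ) < 1/p))
    linarith
  have key : α*Lr + (1/p) * ((K+1-α*p)*(L2+Lr) - ((1-t)*K + 2*(1-s))*Lδ - (K+1)*Lr)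
      = ((K+1-α*p)/p)*L2 + (-(((1-t)*K + 2*(1-s))/p))*Lδ := by
    field_simp
    ring
  have last : ((K+1-α*p)/p)*L2 ≤ (K+1)*L2 := by
    apply mul_le_mul_of_nonneg_right _ (le_of_lt f6)
    rw [div_le_iff₀ hp0]
    have h1 : (K+1)*1 ≤ (K+1)*p := mul_le_mul_of_nonneg_left hp1 (by linarith)
    have h2 : 0 < α*p := mul_pos hα hp0
    linarith
  linarith [step, key.le, key.ge, last]

set_option maxHeartbeats 1000000 in
/-- For the characteristic function `V` of the Knapp tube
`T = [0,δ⁻¹]^{n-1} × [0,δ⁻²]`, the Morrey–Campanato norm `‖V‖_{𝓛^{α,p}}` is comparable to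
`δ^{-α}` if `1/p ≥ α/(n-1)` and to `δ^{-2α+(n-1)/p}` if `1/p ≤ α/(n-1)`, with constants
depending only on `n`, `α` and `p`. -/
theorem stmt17 (n : ℕ) (hn : 2 ≤ n) (α p : ℝ) (hα : 0 < α) (hp1 : 1 ≤ p)
    (hp2 : p ≤ (n : ℝ) / α) :
    ∃ c C : ℝ, 0 < c ∧ 0 < C ∧
      ∀ δ : ℝ, 0 < δ → δ < 1 →
      ∀ V : EuclideanSpace ℝ (Fin n) → ℝ,
        V = Set.indicator {z : EuclideanSpace ℝ (Fin n) |
              (∀ j : Fin n, (j : ℕ) < n - 1 → z j ∈ Set.Icc (0 : ℝ) δ⁻¹) ∧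
              z ⟨n - 1, by omega⟩ ∈ Set.Icc (0 : ℝ) (δ ^ 2)⁻¹}
            (fun _ => (1 : ℝ)) →
        ((α / ((n : ℝ) - 1) ≤ 1/p →
            ENNReal.ofReal (c * δ ^ (-α)) ≤ morreyNorm n α p V ∧
              morreyNorm n α p V ≤ ENNReal.ofReal (C * δ ^ (-α))) ∧
         (1/p ≤ α / ((n : ℝ) - 1) →
            ENNReal.ofReal (c * δ ^ (-(2*α) + ((n : ℝ) - 1) / p)) ≤ morreyNorm n α p V ∧
              morreyNorm n α p V ≤ ENNReal.ofReal (C * δ ^ (-(2*α) + ((n : ℝ) - 1) / p)))) := by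
  obtain ⟨k, rfl⟩ : ∃ k, n = k + 1 := ⟨n - 1, by omega⟩
  have hk : 1 ≤ k := by omega
  have hK : (1:ℝ) ≤ (k:ℝ) := by exact_mod_cast hk
  have hp0 : (0:ℝ) < p := lt_of_lt_of_le one_pos hp1
  have hcast : (((k+1:ℕ)):ℝ) = (k:ℝ)+1 := by push_cast; ring
  have hαpK1 : α * p ≤ (k:ℝ) + 1 := by
    have := (le_div_iff₀ hα).mp hp2
    rw [hcast] at this; linarith
  set m₀ := volume (Metric.ball (0 : EuclideanSpace ℝ (Fin (k+1))) 1) with hm₀def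
  have hm₀0 : m₀ ≠ 0 := (Metric.measure_ball_pos volume 0 one_pos).ne'
  have hm₀top : m₀ ≠ ⊤ := measure_ball_lt_top.ne
  have hm₀p_top : m₀ ^ (1/p) ≠ ⊤ := ENNReal.rpow_ne_top_of_nonneg (by positivity) hm₀top
  have hm₀p_0 : m₀ ^ (1/p) ≠ 0 := by
    simp only [ne_eq, ENNReal.rpow_eq_zero_iff, not_or]
    push_neg
    exact ⟨fun h => absurd h hm₀0, fun h => absurd h hm₀top⟩
  set c₁ := (m₀ ^ (1/p)).toReal with hc₁def
  have hc₁0 : 0 < c₁ := ENNReal.toReal_pos hm₀p_0 hm₀p_top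
  have hc₁eq : ENNReal.ofReal c₁ = m₀ ^ (1/p) := ENNReal.ofReal_toReal hm₀p_top
  have hcL1 : (0:ℝ) < 2^(-α) * c₁ := by positivity
  have hcL2 : (0:ℝ) < ((k:ℝ)+1) ^ (α - ((k:ℝ)+1)/p) := by positivity
  refine ⟨min ((2:ℝ)^(-α) * c₁) (((k:ℝ)+1) ^ (α - ((k:ℝ)+1)/p)), (2:ℝ) ^ ((k:ℝ)+1),
    lt_min hcL1 hcL2, by positivity, ?_⟩
  intro δ hδ0 hδ1 V hV
  have hδ2 : (0:ℝ) < δ^2 := by positivity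
  have hδi : (0:ℝ) < δ⁻¹ := by positivity
  have hδ2i : (0:ℝ) < (δ^2)⁻¹ := by positivity
  have hδ21 : δ^2 ≤ δ := by nlinarith
  have hδinv : δ⁻¹ ≤ (δ^2)⁻¹ := by
    apply inv_anti₀ hδ2 hδ21
  set a : Fin (k+1) → ℝ := fun j => if (j:ℕ) < k then δ⁻¹ else (δ^2)⁻¹ with hadef
  have ha_pos : ∀ j, 0 < a j := by
    intro j; by_cases h : (j:ℕ) < k <;> simp only [hadef, h, if_true, if_false] <;> positivity
  have ha_ge : ∀ j, δ⁻¹ ≤ a j := by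
    intro j; by_cases h : (j:ℕ) < k <;> simp only [hadef, h, if_true, if_false]
    · exact le_refl _
    · exact hδinv
  have ha_le : ∀ j, a j ≤ (δ^2)⁻¹ := by
    intro j; by_cases h : (j:ℕ) < k <;> simp only [hadef, h, if_true, if_false]
    · exact hδinv
    · exact le_refl _
  set T : Set (EuclideanSpace ℝ (Fin (k+1))) := {z | ∀ j, z j ∈ Set.Icc 0 (a j)} with hTdef
  have hsetT : {z : EuclideanSpace ℝ (Fin (k+1)) |
        (∀ j : Fin (k+1), (j : ℕ) < k + 1 - 1 → z j ∈ Set.Icc (0 : ℝ) δ⁻¹) ∧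
        z ⟨k + 1 - 1, by omega⟩ ∈ Set.Icc (0 : ℝ) (δ ^ 2)⁻¹} = T := by
    ext z
    simp only [hTdef, Set.mem_setOf_eq]
    constructor
    · rintro ⟨h1, h2⟩ j
      by_cases hj : (j:ℕ) < k
      · have := h1 j (by omega)
        simpa [hadef, hj] using this
      · have hjk : j = (⟨k + 1 - 1, by omega⟩ : Fin (k+1)) := by
          apply Fin.ext; simp; omega
        rw [hjk]
        simpa [hadef, hj, hjk] using h2
    · intro h
      constructor
      · intro j hj
        have := h j
        simpa [hadef, (by omega : (j:ℕ) < k)] using this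
      · have := h ⟨k + 1 - 1, by omega⟩
        simpa [hadef, (by omega : ¬ (k + 1 - 1 < k))] using this
  have hV' : V = T.indicator (fun _ => (1:ℝ)) := by
    rw [hV]
    exact congrArg (fun S => Set.indicator S (fun _ => (1:ℝ))) hsetT
  have hTm : MeasurableSet T := by
    have he : T = (MeasurableEquiv.toLp 2 (Fin (k+1) → ℝ)).symm
        ⁻¹' (Set.univ.pi fun j => Set.Icc 0 (a j)) := by
      ext z
      simp [hTdef, Set.mem_pi, MeasurableEquiv.coe_toLp_symm, Pi.le_def, Set.mem_Icc,
        forall_and]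
    rw [he]
    exact (MeasurableSet.univ_pi fun j => measurableSet_Icc).preimage
      (MeasurableEquiv.measurable _)
  have hint : ∀ B : Set (EuclideanSpace ℝ (Fin (k+1))),
      ∫⁻ y in B, ENNReal.ofReal (V y ^ p) = volume (T ∩ B) := by
    intro B
    have hVp : ∀ y, ENNReal.ofReal (V y ^ p) = T.indicator (fun _ => (1:ℝ≥0∞)) y := by
      intro y
      by_cases hy : y ∈ T
      · simp [hV', Set.indicator_of_mem hy]
      · simp [hV', Set.indicator_of_notMem hy, Real.zero_rpow (ne_of_gt hp0)]
    simp_rw [hVp]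
    rw [lintegral_indicator hTm, setLIntegral_one, Measure.restrict_apply hTm]
  -- product over coordinates
  have hprodmin : ∀ b : ℝ, 0 < b →
      (∏ j, ENNReal.ofReal (min (a j) b))
        = ENNReal.ofReal (min δ⁻¹ b ^ k * min ((δ^2)⁻¹) b) := by
    intro b hb
    rw [← ENNReal.ofReal_prod_of_nonneg (fun j _ => le_of_lt (lt_min (ha_pos j) hb))]
    congr 1
    rw [Fin.prod_univ_castSucc]
    have h1 : ∀ i : Fin k, a i.castSucc = δ⁻¹ := by
      intro i; simp only [hadef]; rw [if_pos]; simpa using i.isLt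
    have h2 : a (Fin.last k) = (δ^2)⁻¹ := by
      simp only [hadef]; rw [if_neg]; simp
    simp only [h1, h2]
    rw [Finset.prod_const, Finset.card_univ, Fintype.card_fin]
  have hvolT : volume T = ENNReal.ofReal (δ⁻¹ ^ k * (δ^2)⁻¹) := by
    rw [hTdef, box_volume]
    have h1 : ∀ j : Fin (k+1), volume (Set.Icc (0:ℝ) (a j)) = ENNReal.ofReal (a j) := by
      intro j; rw [Real.volume_Icc, sub_zero]
    simp only [h1]
    rw [← ENNReal.ofReal_prod_of_nonneg (fun j _ => le_of_lt (ha_pos j))]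
    congr 1
    rw [Fin.prod_univ_castSucc]
    have h2 : ∀ i : Fin k, a i.castSucc = δ⁻¹ := by
      intro i; simp only [hadef]; rw [if_pos]; simpa using i.isLt
    have h3 : a (Fin.last k) = (δ^2)⁻¹ := by
      simp only [hadef]; rw [if_neg]; simp
    simp only [h2, h3]
    rw [Finset.prod_const, Finset.card_univ, Fintype.card_fin]
  -- upper bound
  have hupper : ∀ t s : ℝ, 0 ≤ t → t ≤ 1 → 0 ≤ s → s ≤ 1 →
      t*(k:ℝ) + s = ((k:ℝ)+1) - α*p →
      morreyNorm (k+1) α p V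
        ≤ ENNReal.ofReal ((2:ℝ) ^ ((k:ℝ)+1) * δ ^ (-(((1-t)*(k:ℝ) + 2*(1-s))/p))) := by
    intro t s ht0 ht1 hs0 hs1 hts
    simp only [morreyNorm]
    apply iSup_le; intro x
    apply iSup_le; intro r
    apply iSup_le; intro hr
    have h2r : (0:ℝ) < 2*r := by linarith
    have hP0 : (0:ℝ) < min δ⁻¹ (2*r) ^ k * min ((δ^2)⁻¹) (2*r) :=
      mul_pos (pow_pos (lt_min hδi h2r) k) (lt_min hδ2i h2r)
    have hIB : ∫⁻ y in Metric.ball x r, ENNReal.ofReal (V y ^ p)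
        ≤ ENNReal.ofReal (min δ⁻¹ (2*r) ^ k * min ((δ^2)⁻¹) (2*r)) := by
      rw [hint]
      calc volume (T ∩ Metric.ball x r)
          ≤ volume {z : EuclideanSpace ℝ (Fin (k+1)) |
              ∀ j, z j ∈ Set.Icc 0 (a j) ∩ Set.Icc (x j - r) (x j + r)} := by
            apply measure_mono
            rintro z ⟨hzT, hzB⟩ j
            refine ⟨hzT j, ?_⟩
            have h1 := coord_abs (k+1) z x j
            have h2 : dist z x < r := Metric.mem_ball.mp hzB
            have h3 := abs_le.mp (le_of_lt (lt_of_le_of_lt h1 h2))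
            exact Set.mem_Icc.mpr ⟨by linarith [h3.1], by linarith [h3.2]⟩
        _ = ∏ j, volume (Set.Icc 0 (a j) ∩ Set.Icc (x j - r) (x j + r)) := box_volume _ _
        _ ≤ ∏ j, ENNReal.ofReal (min (a j) (2*r)) := by
            apply Finset.prod_le_prod'
            intro j _
            rcases le_total (a j) (2*r) with h | h
            · rw [min_eq_left h]
              calc volume (Set.Icc 0 (a j) ∩ Set.Icc (x j - r) (x j + r))
                  ≤ volume (Set.Icc (0:ℝ) (a j)) := measure_mono Set.inter_subset_left
                _ = ENNReal.ofReal (a j) := by rw [Real.volume_Icc, sub_zero]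
            · rw [min_eq_right h]
              calc volume (Set.Icc 0 (a j) ∩ Set.Icc (x j - r) (x j + r))
                  ≤ volume (Set.Icc (x j - r) (x j + r)) := measure_mono Set.inter_subset_right
                _ = ENNReal.ofReal (2*r) := by rw [Real.volume_Icc]; ring_nf
        _ = ENNReal.ofReal (min δ⁻¹ (2*r) ^ k * min ((δ^2)⁻¹) (2*r)) := hprodmin (2*r) h2r
    calc ENNReal.ofReal (r ^ α) *
          (ENNReal.ofReal (r ^ (-(((k+1:ℕ)):ℝ))) *
            ∫⁻ y in Metric.ball x r, ENNReal.ofReal (V y ^ p)) ^ (1/p)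
        ≤ ENNReal.ofReal (r ^ α) *
          (ENNReal.ofReal (r ^ (-(((k+1:ℕ)):ℝ))) *
            ENNReal.ofReal (min δ⁻¹ (2*r) ^ k * min ((δ^2)⁻¹) (2*r))) ^ (1/p) :=
          mul_le_mul_right (ENNReal.rpow_le_rpow (mul_le_mul_right hIB _) (by positivity)) _
      _ = ENNReal.ofReal (r ^ α *
            (r ^ (-((k:ℝ)+1)) * (min δ⁻¹ (2*r) ^ k * min ((δ^2)⁻¹) (2*r))) ^ (1/p)) := by
          rw [hcast, ← ENNReal.ofReal_mul (by positivity : (0:ℝ) ≤ r ^ (-((k:ℝ)+1))),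
            ENNReal.ofReal_rpow_of_pos (by positivity),
            ← ENNReal.ofReal_mul (by positivity : (0:ℝ) ≤ r ^ α)]
      _ ≤ _ := ENNReal.ofReal_le_ofReal
          (keyUB k hk α p t s δ r hα hp1 ht0 ht1 hs0 hs1 hts hδ0 hδ1 hr)
  -- first lower bound : scale δ⁻¹
  have low1 : ENNReal.ofReal ((2^(-α) * c₁) * δ^(-α)) ≤ morreyNorm (k+1) α p V := by
    set ρ : ℝ := δ⁻¹/2 with hρdef
    have hρ : 0 < ρ := by positivity
    set x₀ : EuclideanSpace ℝ (Fin (k+1)) := WithLp.toLp 2 (fun j => a j / 2 : Fin (k+1) → ℝ) with hx₀def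
    have hball : Metric.ball x₀ ρ ⊆ T := by
      intro z hz j
      have h1 := coord_abs (k+1) z x₀ j
      have h2 : dist z x₀ < ρ := Metric.mem_ball.mp hz
      have h3 := abs_lt.mp (lt_of_le_of_lt h1 h2)
      have hx₀j : x₀ j = a j / 2 := rfl
      rw [hx₀j] at h3
      have hge := ha_ge j
      have hρa : 2*ρ ≤ a j := by rw [hρdef]; linarith
      exact Set.mem_Icc.mpr ⟨by linarith [h3.1], by linarith [h3.2]⟩
    have hvol : volume (T ∩ Metric.ball x₀ ρ) = ENNReal.ofReal (ρ ^ (k+1)) * m₀ := by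
      rw [Set.inter_eq_self_of_subset_right hball,
        Measure.addHaar_ball volume x₀ hρ.le, finrank_euclideanSpace_fin]
    have hone : ENNReal.ofReal (ρ ^ (-(((k+1:ℕ)):ℝ))) * ENNReal.ofReal (ρ ^ (k+1)) = 1 := by
      rw [← ENNReal.ofReal_mul (by positivity), ← Real.rpow_natCast ρ (k+1),
        ← Real.rpow_add hρ]
      rw [neg_add_cancel, Real.rpow_zero, ENNReal.ofReal_one]
    have hterm : ENNReal.ofReal (ρ ^ α) *
        (ENNReal.ofReal (ρ ^ (-(((k+1:ℕ)):ℝ))) *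
          ∫⁻ y in Metric.ball x₀ ρ, ENNReal.ofReal (V y ^ p)) ^ (1/p)
        = ENNReal.ofReal ((2^(-α) * c₁) * δ^(-α)) := by
      rw [hint, hvol, ← mul_assoc, hone, one_mul, ← hc₁eq,
        ← ENNReal.ofReal_mul (by positivity : (0:ℝ) ≤ ρ ^ α)]
      congr 1
      have hρα : ρ ^ α = 2^(-α) * δ^(-α) := by
        rw [hρdef, show δ⁻¹/2 = 2⁻¹ * δ⁻¹ from by ring,
          Real.mul_rpow (by norm_num) (le_of_lt hδi),
          Real.inv_rpow (by norm_num : (0:ℝ) ≤ 2) α, Real.inv_rpow hδ0.le α,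
          ← Real.rpow_neg (by norm_num : (0:ℝ) ≤ 2) α, ← Real.rpow_neg hδ0.le α]
      rw [hρα]; ring
    rw [← hterm]
    simp only [morreyNorm]
    exact le_iSup_of_le x₀ (le_iSup_of_le ρ (le_iSup_of_le hρ le_rfl))
  -- second lower bound : scale δ⁻²
  have low2 : ENNReal.ofReal ((((k:ℝ)+1) ^ (α - ((k:ℝ)+1)/p)) * δ ^ (-(2*α) + (k:ℝ)/p))
      ≤ morreyNorm (k+1) α p V := by
    set R : ℝ := ((k:ℝ)+1) * (δ^2)⁻¹ with hRdef
    have hN : (0:ℝ) < (k:ℝ)+1 := by linarith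
    have hR : 0 < R := by positivity
    have hTball : T ⊆ Metric.ball 0 R := by
      intro z hz
      rw [Metric.mem_ball, EuclideanSpace.dist_eq, Real.sqrt_lt' hR]
      have hb : ∀ j, dist (z j) ((0 : EuclideanSpace ℝ (Fin (k+1))) j) ^ 2 ≤ ((δ^2)⁻¹)^2 := by
        intro j
        have h0 : (0 : EuclideanSpace ℝ (Fin (k+1))) j = (0:ℝ) := rfl
        rw [h0, Real.dist_eq, sub_zero, sq_abs]
        have hzj := hz j
        have hub : z j ≤ (δ^2)⁻¹ := le_trans hzj.2 (ha_le j)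
        nlinarith [hzj.1]
      calc ∑ j, dist (z j) ((0 : EuclideanSpace ℝ (Fin (k+1))) j) ^ 2
          ≤ ∑ _j : Fin (k+1), ((δ^2)⁻¹)^2 := Finset.sum_le_sum (fun j _ => hb j)
        _ = ((k:ℝ)+1) * ((δ^2)⁻¹)^2 := by
            rw [Finset.sum_const, Finset.card_univ, Fintype.card_fin, nsmul_eq_mul]
            push_cast; ring
        _ < R^2 := by rw [hRdef]; nlinarith [hδ2i, hK, sq_nonneg ((δ^2)⁻¹)]
    have hvol2 : volume (T ∩ Metric.ball 0 R) = ENNReal.ofReal (δ⁻¹^k * (δ^2)⁻¹) := by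
      rw [Set.inter_eq_self_of_subset_left hTball, hvolT]
    have hXpos : (0:ℝ) < R ^ (-((k:ℝ)+1)) * (δ⁻¹^k * (δ^2)⁻¹) := by positivity
    have hreal : R ^ α * (R ^ (-((k:ℝ)+1)) * (δ⁻¹^k * (δ^2)⁻¹)) ^ (1/p)
        = (((k:ℝ)+1) ^ (α - ((k:ℝ)+1)/p)) * δ ^ (-(2*α) + (k:ℝ)/p) := by
      have hLR : Real.log R = Real.log ((k:ℝ)+1) - 2 * Real.log δ := by
        rw [hRdef, Real.log_mul (ne_of_gt hN) (ne_of_gt hδ2i), Real.log_inv, Real.log_pow]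
        push_cast; ring
      rw [Real.rpow_def_of_pos hR, Real.rpow_def_of_pos hXpos, Real.rpow_def_of_pos hN,
        Real.rpow_def_of_pos hδ0, ← Real.exp_add, ← Real.exp_add]
      congr 1
      have hlog : Real.log (R ^ (-((k:ℝ)+1)) * (δ⁻¹^k * (δ^2)⁻¹))
          = -((k:ℝ)+1) * Real.log R - ((k:ℝ)+2) * Real.log δ := by
        rw [Real.log_mul (by positivity) (by positivity),
          Real.log_mul (by positivity) (ne_of_gt hδ2i),
          Real.log_rpow hR, Real.log_pow, Real.log_inv, Real.log_inv, Real.log_pow]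
        push_cast; ring
      rw [hlog, hLR]
      field_simp
      ring
    have hterm2 : ENNReal.ofReal (R ^ α) *
        (ENNReal.ofReal (R ^ (-(((k+1:ℕ)):ℝ))) *
          ∫⁻ y in Metric.ball 0 R, ENNReal.ofReal (V y ^ p)) ^ (1/p)
        = ENNReal.ofReal ((((k:ℝ)+1) ^ (α - ((k:ℝ)+1)/p)) * δ ^ (-(2*α) + (k:ℝ)/p)) := by
      rw [hint, hvol2, hcast,
        ← ENNReal.ofReal_mul (by positivity : (0:ℝ) ≤ R ^ (-((k:ℝ)+1))),
        ENNReal.ofReal_rpow_of_pos hXpos,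
        ← ENNReal.ofReal_mul (by positivity : (0:ℝ) ≤ R ^ α), hreal]
    rw [← hterm2]
    simp only [morreyNorm]
    exact le_iSup_of_le 0 (le_iSup_of_le R (le_iSup_of_le hR le_rfl))
  -- assembly
  have hKeq : ((k+1:ℕ):ℝ) - 1 = (k:ℝ) := by push_cast; ring
  constructor
  · intro h1
    rw [hKeq] at h1
    have hαpK : α * p ≤ (k:ℝ) := by
      have hk0 : (0:ℝ) < (k:ℝ) := by linarith
      have := (div_le_div_iff₀ hk0 hp0).mp h1
      linarith
    constructor
    · refine le_trans (ENNReal.ofReal_le_ofReal ?_) low1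
      exact mul_le_mul_of_nonneg_right (min_le_left _ _) (Real.rpow_nonneg hδ0.le _)
    · set t : ℝ := ((k:ℝ) - α*p)/(k:ℝ) with htdef
      have hk0 : (0:ℝ) < (k:ℝ) := by linarith
      have ht0 : 0 ≤ t := div_nonneg (by linarith) hk0.le
      have ht1 : t ≤ 1 := by
        rw [htdef, div_le_one hk0]
        nlinarith [mul_pos hα hp0]
      have hts : t*(k:ℝ) + 1 = ((k:ℝ)+1) - α*p := by
        rw [htdef]; field_simp; ring
      have h := hupper t 1 ht0 ht1 zero_le_one le_rfl hts
      have hβ : -((((1:ℝ)-t)*(k:ℝ) + 2*(1-1))/p) = -α := by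
        rw [htdef]; field_simp; ring
      rwa [hβ] at h
  · intro h2
    rw [hKeq] at h2 ⊢
    have hαpK : (k:ℝ) ≤ α * p := by
      have hk0 : (0:ℝ) < (k:ℝ) := by linarith
      have := (div_le_div_iff₀ hp0 hk0).mp h2
      linarith
    constructor
    · refine le_trans (ENNReal.ofReal_le_ofReal ?_) low2
      exact mul_le_mul_of_nonneg_right (min_le_right _ _) (Real.rpow_nonneg hδ0.le _)
    · set s : ℝ := (k:ℝ) + 1 - α*p with hsdef
      have hs0 : 0 ≤ s := by rw [hsdef]; linarith
      have hs1 : s ≤ 1 := by rw [hsdef]; linarith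
      have hts : 0*(k:ℝ) + s = ((k:ℝ)+1) - α*p := by rw [hsdef]; ring
      have h := hupper 0 s (le_refl 0) zero_le_one hs0 hs1 hts
      have hβ : -((((1:ℝ)-0)*(k:ℝ) + 2*(1-s))/p) = -(2*α) + (k:ℝ)/p := by
        rw [hsdef]; field_simp; ring
      rwa [hβ] at h
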